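/- Let M = [[A, B], [C, D]] ∈ ℂ^{2n×2n} where A, D, BC, CB ∈ ℂ^{n×n} are *-DMP. If AB = BD, DC = CA, B*A = DB*, and A^D B D^D C is nilpotent, then M is *-DMP. -/
import Mathlib


/-- Moore–Penrose inverse. -/
def IsMP {A : Type*} [Ring A] [StarRing A] (a x : A) : Prop :=
  a * x * a = a ∧ x * a * x = x ∧ star (a * x) = a * x ∧ star (x * a) = x * a

/-- Group inverse. -/
def IsGroupInv {A : Type*} [Ring A] (a x : A) : Prop :=
  a * x * a = a ∧ x * a * x = x ∧ a * x = x * a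

/-- `a` is *-DMP: some power `a ^ n` (`n ≥ 1`) has a common Moore–Penrose and group inverse. -/
def IsStarDMP {A : Type*} [Ring A] [StarRing A] (a : A) : Prop :=
  ∃ n : ℕ, 1 ≤ n ∧ ∃ x : A, IsMP (a ^ n) x ∧ IsGroupInv (a ^ n) x

/-- `x` is the Drazin inverse of `a` (with some index `k`). -/
def IsDrazin {A : Type*} [Ring A] (a x : A) : Prop :=
  ∃ k : ℕ, x * a ^ (k + 1) = a ^ k ∧ a * x ^ 2 = x ∧ a * x = x * a

/-- `x` is the pseudo core inverse of `a`. -/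
def IsPCore {A : Type*} [Ring A] [StarRing A] (a x : A) : Prop :=
  ∃ k : ℕ, x * a ^ (k + 1) = a ^ k ∧ a * x ^ 2 = x ∧ star (a * x) = a * x

/-- EP element: common group and Moore–Penrose inverse. -/
def IsEP {A : Type*} [Ring A] [StarRing A] (a : A) : Prop :=
  ∃ x : A, IsMP a x ∧ IsGroupInv a x

section RingLemmas
variable {R : Type*} [Ring R]

lemma groupInv_unique {b x y : R} (hx : IsGroupInv b x) (hy : IsGroupInv b y) : x = y := by
  obtain ⟨hx1, hx2, hx3⟩ := hx
  obtain ⟨hy1, hy2, hy3⟩ := hy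
  have hbby : b * (b * y) = b := by
    calc b * (b * y) = b * (y * b) := by rw [hy3]
    _ = b * y * b := by noncomm_ring
    _ = b := hy1
  have huv_v : (b * x) * (b * y) = b * y := by
    calc (b * x) * (b * y) = (b * x * b) * y := by noncomm_ring
    _ = b * y := by rw [hx1]
  have huv_u : (b * x) * (b * y) = b * x := by
    calc (b * x) * (b * y) = (x * b) * (b * y) := by rw [hx3]
    _ = x * (b * (b * y)) := by noncomm_ring
    _ = x * b := by rw [hbby]
    _ = b * x := hx3.symm
  have huv : b * x = b * y := huv_u.symm.trans huv_v
  calc x = x * b * x := hx2.symm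
  _ = x * (b * x) := by noncomm_ring
  _ = x * (b * y) := by rw [huv]
  _ = (x * b) * y := by noncomm_ring
  _ = (b * y) * y := by rw [← hx3, huv]
  _ = (y * b) * y := by rw [hy3]
  _ = y * b * y := by noncomm_ring
  _ = y := hy2

lemma groupInv_comm {b x s : R} (h : IsGroupInv b x) (hs : s * b = b * s) : s * x = x * s := by
  obtain ⟨h1, h2, h3⟩ := h
  have hbxx : b * (x * x) = x := by
    calc b * (x * x) = (b * x) * x := by noncomm_ring
    _ = (x * b) * x := by rw [h3]
    _ = x * b * x := by noncomm_ring
    _ = x := h2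
  have key : s * (b * x) = (b * x) * s := by
    have e1 : (b * x) * s * (b * x) = s * (b * x) := by
      calc (b * x) * s * (b * x) = b * x * (s * b) * x := by noncomm_ring
      _ = b * x * (b * s) * x := by rw [hs]
      _ = (b * x * b) * (s * x) := by noncomm_ring
      _ = b * (s * x) := by rw [h1]
      _ = (b * s) * x := by noncomm_ring
      _ = (s * b) * x := by rw [hs]
      _ = s * (b * x) := by noncomm_ring
    have e2 : (b * x) * s * (b * x) = (b * x) * s := by
      calc (b * x) * s * (b * x) = (x * b) * s * (x * b) := by rw [h3]
      _ = (x * (b * s)) * (x * b) := by noncomm_ring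
      _ = (x * (s * b)) * (x * b) := by rw [hs]
      _ = (x * s) * (b * x * b) := by noncomm_ring
      _ = (x * s) * b := by rw [h1]
      _ = x * (s * b) := by noncomm_ring
      _ = x * (b * s) := by rw [hs]
      _ = (x * b) * s := by noncomm_ring
      _ = (b * x) * s := by rw [← h3]
    exact e1.symm.trans e2
  have hxbx : x * (b * x) = x := by
    calc x * (b * x) = x * b * x := by noncomm_ring
    _ = x := h2
  calc s * x = s * (b * (x * x)) := by rw [hbxx]
  _ = (s * (b * x)) * x := by noncomm_ring
  _ = ((b * x) * s) * x := by rw [key]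
  _ = ((x * b) * s) * x := by rw [h3]
  _ = (x * (b * s)) * x := by noncomm_ring
  _ = (x * (s * b)) * x := by rw [hs]
  _ = (x * (s * (b * x)))  := by noncomm_ring
  _ = (x * ((b * x) * s)) := by rw [key]
  _ = (x * (b * x)) * s := by noncomm_ring
  _ = x * s := by rw [hxbx]

lemma idem_pow {e : R} (he : e * e = e) : ∀ j : ℕ, e ^ (j + 1) = e := by
  intro j
  induction j with
  | zero => simp
  | succ j ih => rw [pow_succ, ih, he]

lemma drazin_x_eq {a x : R} (h2 : a * x ^ 2 = x) (h3 : a * x = x * a) :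
    ∀ j : ℕ, a ^ j * x ^ (j + 1) = x := by
  intro j
  induction j with
  | zero => simp
  | succ j ih =>
    have hc : Commute a x := h3
    have hx2 : x ^ (j + 2) = x ^ 2 * x ^ j := by rw [← pow_add]; ring_nf
    calc a ^ (j + 1) * x ^ (j + 2) = a ^ j * (a * (x ^ 2 * x ^ j)) := by
          rw [← hx2, pow_succ]; noncomm_ring
    _ = a ^ j * ((a * x ^ 2) * x ^ j) := by noncomm_ring
    _ = a ^ j * (x * x ^ j) := by rw [h2]
    _ = a ^ j * x ^ (j + 1) := by rw [← pow_succ']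
    _ = x := ih

lemma drazin_mono {a x : R} {k : ℕ} (h1 : x * a ^ (k + 1) = a ^ k) :
    ∀ m : ℕ, x * a ^ (k + m + 1) = a ^ (k + m) := by
  intro m
  induction m with
  | zero => simpa using h1
  | succ m ih =>
    have : a ^ (k + m + 1 + 1) = a ^ (k + m + 1) * a := by rw [← pow_succ]
    calc x * a ^ (k + (m+1) + 1) = (x * a ^ (k + m + 1)) * a := by
          rw [show k + (m+1) + 1 = (k + m + 1) + 1 by ring, this]; noncomm_ring
    _ = a ^ (k + m) * a := by rw [ih]
    _ = a ^ (k + (m + 1)) := by rw [← pow_succ]; ring_nf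

lemma drazin_pow_groupInv {a x : R} {k : ℕ} (h1 : x * a ^ (k + 1) = a ^ k)
    (h2 : a * x ^ 2 = x) (h3 : a * x = x * a) :
    IsGroupInv (a ^ (k + 1)) (x ^ (k + 1)) := by
  have hc : Commute a x := h3
  have hxax : x * a * x = x := by
    calc x * a * x = (a * x) * x := by rw [← h3]
    _ = a * x ^ 2 := by noncomm_ring
    _ = x := h2
  have hidem : (a * x) * (a * x) = a * x := by
    calc (a * x) * (a * x) = a * (x * a * x) := by noncomm_ring
    _ = a * x := by rw [hxax]
  have hkey : a ^ (k + 1) * x ^ (k + 1) = a * x := by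
    rw [← hc.mul_pow, idem_pow hidem]
  have hkey2 : x ^ (k + 1) * a ^ (k + 1) = a * x := by
    rw [← (hc.symm.mul_pow), ← h3, idem_pow hidem]
  refine ⟨?_, ?_, ?_⟩
  · calc a ^ (k+1) * x ^ (k+1) * a ^ (k+1) = (a * x) * a ^ (k + 1) := by rw [hkey]
    _ = a * (x * a ^ (k + 1)) := by noncomm_ring
    _ = a * a ^ k := by rw [h1]
    _ = a ^ (k + 1) := by rw [← pow_succ']
  · have hxx : x * x ^ (k + 1) = x ^ 2 * x ^ k := by
      rw [← pow_succ', ← pow_add]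
      congr 1
      omega
    calc x ^ (k+1) * a ^ (k+1) * x ^ (k+1) = (a * x) * x ^ (k + 1) := by rw [hkey2]
    _ = a * (x * x ^ (k + 1)) := by noncomm_ring
    _ = a * (x ^ 2 * x ^ k) := by rw [hxx]
    _ = (a * x ^ 2) * x ^ k := by noncomm_ring
    _ = x * x ^ k := by rw [h2]
    _ = x ^ (k + 1) := by rw [← pow_succ']
  · exact (hc.pow_pow _ _).eq

lemma drazin_comm {a x s : R} (h : IsDrazin a x) (hs : s * a = a * s) : s * x = x * s := by
  obtain ⟨k, h1, h2, h3⟩ := h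
  have hg := drazin_pow_groupInv h1 h2 h3
  have hcsa : Commute s a := hs
  have hsp : s * a ^ (k + 1) = a ^ (k + 1) * s := (hcsa.pow_right (k+1)).eq
  have hsx : s * x ^ (k + 1) = x ^ (k + 1) * s := groupInv_comm hg hsp
  have hx := drazin_x_eq h2 h3 k
  calc s * x = s * (a ^ k * x ^ (k + 1)) := by rw [hx]
  _ = (s * a ^ k) * x ^ (k + 1) := by noncomm_ring
  _ = (a ^ k * s) * x ^ (k + 1) := by rw [(hcsa.pow_right k).eq]
  _ = a ^ k * (s * x ^ (k + 1)) := by noncomm_ring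
  _ = a ^ k * (x ^ (k + 1) * s) := by rw [hsx]
  _ = (a ^ k * x ^ (k + 1)) * s := by noncomm_ring
  _ = x * s := by rw [hx]

lemma drazin_unique {a x y : R} (hx : IsDrazin a x) (hy : IsDrazin a y) : x = y := by
  obtain ⟨k, hk1, hk2, hk3⟩ := hx
  obtain ⟨l, hl1, hl2, hl3⟩ := hy
  have hx1 : x * a ^ (max k l + 1) = a ^ (max k l) := by
    have := drazin_mono hk1 (max k l - k)
    rwa [show k + (max k l - k) = max k l by omega] at this
  have hy1 : y * a ^ (max k l + 1) = a ^ (max k l) := by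
    have := drazin_mono hl1 (max k l - l)
    rwa [show l + (max k l - l) = max k l by omega] at this
  have gx := drazin_pow_groupInv hx1 hk2 hk3
  have gy := drazin_pow_groupInv hy1 hl2 hl3
  have hpow : x ^ (max k l + 1) = y ^ (max k l + 1) := groupInv_unique gx gy
  calc x = a ^ (max k l) * x ^ (max k l + 1) := (drazin_x_eq hk2 hk3 _).symm
  _ = a ^ (max k l) * y ^ (max k l + 1) := by rw [hpow]
  _ = y := drazin_x_eq hl2 hl3 _

lemma groupInv_pow_drazin {c x : R} (j : ℕ) (hg : IsGroupInv (c ^ (j + 1)) x) :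
    IsDrazin c (c ^ j * x) ∧ c * (c ^ j * x) = c ^ (j + 1) * x := by
  obtain ⟨hg1, hg2, hg3⟩ := hg
  have hcx : c * x = x * c := groupInv_comm ⟨hg1, hg2, hg3⟩ ((Commute.self_pow c (j+1)).eq)
  have hcjx : x * c ^ j = c ^ j * x := ((show Commute c x from hcx).symm.pow_right j).eq
  have hcd : c * (c ^ j * x) = c ^ (j + 1) * x := by rw [← mul_assoc, ← pow_succ']
  refine ⟨⟨j + 1, ?_, ?_, ?_⟩, hcd⟩
  · -- (c^j * x) * c^(j+2) = c^(j+1)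
    calc (c ^ j * x) * c ^ (j + 1 + 1) = (c ^ j * x) * (c * c ^ (j + 1)) := by
          rw [← pow_succ']
    _ = c ^ j * ((x * c) * c ^ (j + 1)) := by noncomm_ring
    _ = c ^ j * ((c * x) * c ^ (j + 1)) := by rw [← hcx]
    _ = (c ^ j * c) * (x * c ^ (j + 1)) := by noncomm_ring
    _ = c ^ (j + 1) * (x * c ^ (j + 1)) := by rw [← pow_succ]
    _ = c ^ (j + 1) * x * c ^ (j + 1) := by noncomm_ring
    _ = c ^ (j + 1) := hg1
  · -- c * (c^j * x)^2 = c^j * x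
    calc c * (c ^ j * x) ^ 2 = (c * c ^ j) * ((x * c ^ j) * x) := by
          rw [pow_two]; noncomm_ring
    _ = (c * c ^ j) * ((c ^ j * x) * x) := by rw [hcjx]
    _ = (c ^ (j+1) * c ^ j) * (x * x) := by rw [← pow_succ']; noncomm_ring
    _ = c ^ j * ((c ^ (j + 1) * x) * x) := by
          rw [show c ^ (j+1) * c ^ j = c ^ j * c ^ (j+1) by
            exact (Commute.pow_pow_self c _ _).eq]
          noncomm_ring
    _ = c ^ j * ((x * c ^ (j + 1)) * x) := by rw [hg3]
    _ = c ^ j * (x * c ^ (j + 1) * x) := by noncomm_ring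
    _ = c ^ j * x := by rw [hg2]
  · rw [hcd, hg3, ← hcjx, pow_succ]; noncomm_ring

end RingLemmas

section StarLemmas
variable {R : Type*} [Ring R] [StarRing R]

lemma starDMP_proj {a y : R} (ha : IsStarDMP a) (hy : IsDrazin a y) :
    star (a * y) = a * y := by
  obtain ⟨m, hm, x, hmp, hgi⟩ := ha
  match m, hm with
  | (j+1), _ =>
    obtain ⟨hd, hcd⟩ := groupInv_pow_drazin j hgi
    have hxy : y = a ^ j * x := drazin_unique hy hd
    rw [hxy, hcd]
    exact hmp.2.2.1

end StarLemmas

section L1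
variable {R : Type*} [Ring R]

lemma pow_add_of_orth {a b : R} (hab : a * b = 0) (hba : b * a = 0) :
    ∀ j : ℕ, (a + b) ^ (j + 1) = a ^ (j + 1) + b ^ (j + 1) := by
  intro j
  induction j with
  | zero => simp
  | succ j ih =>
    have h1 : a ^ (j + 1) * b = 0 := by
      rw [pow_succ, mul_assoc, hab, mul_zero]
    have h2 : b ^ (j + 1) * a = 0 := by
      rw [pow_succ, mul_assoc, hba, mul_zero]
    calc (a + b) ^ (j + 2) = (a + b) ^ (j + 1) * (a + b) := by rw [pow_succ]
    _ = (a ^ (j+1) + b ^ (j+1)) * (a + b) := by rw [ih]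
    _ = a ^ (j+1) * a + (a ^ (j+1) * b + (b ^ (j+1) * a + b ^ (j+1) * b)) := by noncomm_ring
    _ = a ^ (j + 2) + b ^ (j + 2) := by rw [h1, h2, ← pow_succ, ← pow_succ]; noncomm_ring

lemma mul_idem_pow {M e : R} (he : e * e = e) (hce : M * e = e * M) :
    ∀ j : ℕ, (M * e) ^ (j + 1) = M ^ (j + 1) * e := by
  intro j
  induction j with
  | zero => simp
  | succ j ih =>
    calc (M * e) ^ (j + 2) = (M * e) ^ (j + 1) * (M * e) := by rw [pow_succ]
    _ = (M ^ (j+1) * e) * (M * e) := by rw [ih]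
    _ = M ^ (j+1) * ((e * M) * e) := by noncomm_ring
    _ = M ^ (j+1) * ((M * e) * e) := by rw [← hce]
    _ = (M ^ (j+1) * M) * (e * e) := by noncomm_ring
    _ = M ^ (j + 2) * e := by rw [he, ← pow_succ]

end L1

section L1star
variable {R : Type*} [Ring R] [StarRing R]

lemma isStarDMP_of_proj {M e V : R} (m : ℕ)
    (he : e * e = e) (hse : star e = e) (hce : M * e = e * M)
    (hnil : (M * (1 - e)) ^ (m + 1) = 0)
    (hUV : (M * e + (1 - e)) * V = 1) (hVU : V * (M * e + (1 - e)) = 1) :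
    IsStarDMP M := by
  set U := M * e + (1 - e) with hU
  have hUe : U * e = M * e := by
    have : U * e = M * (e * e) + (e - e * e) := by rw [hU]; noncomm_ring
    rw [this, he]; noncomm_ring
  have heU : e * U = M * e := by
    have : e * U = (e * M) * e + (e - e * e) := by rw [hU]; noncomm_ring
    rw [this, he, ← hce, mul_assoc, he]; noncomm_ring
  have hcomUe : Commute U e := hUe.trans heU.symm
  have hVe : V * e = e * V := by
    calc V * e = (V * e) * (U * V) := by rw [hUV, mul_one]
    _ = V * (e * U) * V := by noncomm_ring
    _ = V * (U * e) * V := by rw [heU, hUe]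
    _ = (V * U) * (e * V) := by noncomm_ring
    _ = e * V := by rw [hVU, one_mul]
  have hcomVe : Commute V e := hVe
  have hab : (M * e) * (M * (1 - e)) = 0 := by
    calc (M * e) * (M * (1 - e)) = M * (e * M) * (1 - e) := by noncomm_ring
    _ = M * (M * e) * (1 - e) := by rw [hce]
    _ = (M * M) * (e - e * e) := by noncomm_ring
    _ = 0 := by rw [he]; noncomm_ring
  have hba : (M * (1 - e)) * (M * e) = 0 := by
    calc (M * (1 - e)) * (M * e) = M * (M * e) - M * ((e * M) * e) := by noncomm_ring
    _ = M * (M * e) - M * ((M * e) * e) := by rw [hce]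
    _ = M * (M * e) - (M * M) * (e * e) := by noncomm_ring
    _ = 0 := by rw [he]; noncomm_ring
  have hsplit : M ^ (m + 1) = (M * e) ^ (m + 1) + (M * (1 - e)) ^ (m + 1) := by
    have : M = M * e + M * (1 - e) := by noncomm_ring
    rw [← pow_add_of_orth hab hba m, ← this]
  have hMm : M ^ (m + 1) = U ^ (m + 1) * e := by
    rw [hsplit, hnil, add_zero, ← hUe, hcomUe.mul_pow, idem_pow he]
  have hcomUV : Commute U V := by
    calc U * V = 1 := hUV
    _ = V * U := hVU.symm
  have hUVpow : U ^ (m + 1) * V ^ (m + 1) = 1 := by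
    rw [← hcomUV.mul_pow, hUV, one_pow]
  have hVUpow : V ^ (m + 1) * U ^ (m + 1) = 1 := by
    rw [← hcomUV.symm.mul_pow, hVU, one_pow]
  have hVex : V ^ (m+1) * e = e * V ^ (m+1) := (hcomVe.pow_left (m+1)).eq
  have hUex : U ^ (m+1) * e = e * U ^ (m+1) := (hcomUe.pow_left (m+1)).eq
  set x := V ^ (m + 1) * e with hx
  have hPx : M ^ (m+1) * x = e := by
    calc M ^ (m+1) * x = (U ^ (m+1) * e) * (V ^ (m+1) * e) := by rw [hMm, hx]
    _ = U ^ (m+1) * (e * V ^ (m+1)) * e := by noncomm_ring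
    _ = U ^ (m+1) * (V ^ (m+1) * e) * e := by rw [← hVex]
    _ = (U ^ (m+1) * V ^ (m+1)) * (e * e) := by noncomm_ring
    _ = e := by rw [hUVpow, he, one_mul]
  have hxP : x * M ^ (m+1) = e := by
    calc x * M ^ (m+1) = (V ^ (m+1) * e) * (U ^ (m+1) * e) := by rw [hMm, hx]
    _ = V ^ (m+1) * (e * U ^ (m+1)) * e := by noncomm_ring
    _ = V ^ (m+1) * (U ^ (m+1) * e) * e := by rw [← hUex]
    _ = (V ^ (m+1) * U ^ (m+1)) * (e * e) := by noncomm_ring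
    _ = e := by rw [hVUpow, he, one_mul]
  have heP : e * M ^ (m+1) = M ^ (m+1) := by
    calc e * M ^ (m+1) = e * (U ^ (m+1) * e) := by rw [hMm]
    _ = (e * U ^ (m+1)) * e := by noncomm_ring
    _ = (U ^ (m+1) * e) * e := by rw [← hUex]
    _ = U ^ (m+1) * (e * e) := by noncomm_ring
    _ = M ^ (m+1) := by rw [he, hMm]
  have hex : e * x = x := by
    calc e * x = (e * V ^ (m+1)) * e := by rw [hx]; noncomm_ring
    _ = (V ^ (m+1) * e) * e := by rw [← hVex]
    _ = V ^ (m+1) * (e * e) := by noncomm_ring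
    _ = x := by rw [he, hx]
  have mp1 : M ^ (m+1) * x * M ^ (m+1) = M ^ (m+1) := by rw [hPx, heP]
  have mp2 : x * M ^ (m+1) * x = x := by rw [hxP, hex]
  refine ⟨m + 1, by omega, x, ⟨mp1, mp2, ?_, ?_⟩, ⟨mp1, mp2, ?_⟩⟩
  · rw [hPx, hse]
  · rw [hxP, hse]
  · rw [hPx, hxP]

end L1star

section Core
variable {A : Type*} [CommRing A]

lemma core_computation (N P ND Z : A) (k l t : ℕ)
    (F1 : N * ND ^ 2 = ND) (F2 : ND * N ^ (k + 1) = N ^ k)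
    (G1 : (P * P) * Z ^ 2 = Z) (G2 : Z * (P * P) ^ (l + 1) = (P * P) ^ l)
    (Hnu : (ND * P) ^ t = 0) :
    ∃ (V : A) (m : ℕ), ∀ e : A, e = 1 - (1 - N * ND) * (1 - P * P * Z) →
      e * e = e ∧ (N + P) * e = e * (N + P) ∧ ((N + P) * (1 - e)) ^ (m + 1) = 0 ∧
      ((N + P) * e + (1 - e)) * V = 1 ∧ V * ((N + P) * e + (1 - e)) = 1 := by
  have hE2 : (N * ND) * (N * ND) = N * ND := by linear_combination N * F1
  have hEp2 : (P ^ 2 * Z) * (P ^ 2 * Z) = P ^ 2 * Z := by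
    linear_combination P ^ 2 * G1
  have hproj : N ^ (k + 1) * (1 - N * ND) = 0 := by linear_combination (-N) * F2
  have hprojp : (P ^ 2) ^ (l + 1) * (1 - P ^ 2 * Z) = 0 := by
    linear_combination (-(P ^ 2)) * G2
  -- geometric series units
  have hnu0 : (-(ND * P)) ^ t = 0 := by
    rw [neg_pow, Hnu, mul_zero]
  set w : A := ∑ i ∈ Finset.range t, (-(ND * P)) ^ i with hwdef
  have hw : w * (1 + ND * P) = 1 := by
    have hg := geom_sum_mul (-(ND * P)) t
    rw [hnu0] at hg
    linear_combination -hg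
  have hmu0 : (-(P * Z * N * (1 - N * ND))) ^ (k + 1) = 0 := by
    have hmu : (P * Z * N * (1 - N * ND)) ^ (k + 1) = 0 := by
      rw [mul_pow, mul_pow, pow_succ (1 - N * ND) k]
      calc (P * Z) ^ (k + 1) * N ^ (k + 1) * ((1 - N * ND) ^ k * (1 - N * ND))
          = ((P * Z) ^ (k + 1) * (1 - N * ND) ^ k) * (N ^ (k + 1) * (1 - N * ND)) := by
            ring
      _ = 0 := by rw [hproj, mul_zero]
    rw [neg_pow, hmu, mul_zero]
  set w' : A := ∑ i ∈ Finset.range (k + 1), (-(P * Z * N * (1 - N * ND))) ^ i with hw'def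
  have hw' : w' * (1 + P * Z * N * (1 - N * ND)) = 1 := by
    have hg := geom_sum_mul (-(P * Z * N * (1 - N * ND))) (k + 1)
    rw [hmu0] at hg
    linear_combination -hg
  -- nilpotency of (N+P) * F
  have hnilnF : IsNilpotent (N * ((1 - N * ND) * (1 - P ^ 2 * Z))) := by
    refine ⟨k + 1, ?_⟩
    rw [mul_pow, mul_pow, pow_succ (1 - N * ND) k]
    calc N ^ (k + 1) * ((1 - N * ND) ^ k * (1 - N * ND) * (1 - P ^ 2 * Z) ^ (k + 1))
        = ((1 - P ^ 2 * Z) ^ (k + 1) * (1 - N * ND) ^ k) * (N ^ (k + 1) * (1 - N * ND)) := by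
          ring
    _ = 0 := by rw [hproj, mul_zero]
  have hnilpF : IsNilpotent (P * ((1 - N * ND) * (1 - P ^ 2 * Z))) := by
    refine ⟨2 * l + 1 + 1, ?_⟩
    have hPP : (P ^ 2) ^ (l + 1) = P ^ (2 * l + 1 + 1) := by
      rw [← pow_mul]
      congr 1
    rw [mul_pow, mul_pow, pow_succ (1 - P ^ 2 * Z) (2 * l + 1)]
    calc P ^ (2 * l + 1 + 1) *
          ((1 - N * ND) ^ (2 * l + 1 + 1) * ((1 - P ^ 2 * Z) ^ (2 * l + 1) * (1 - P ^ 2 * Z)))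
        = ((1 - N * ND) ^ (2 * l + 1 + 1) * (1 - P ^ 2 * Z) ^ (2 * l + 1)) *
            (P ^ (2 * l + 1 + 1) * (1 - P ^ 2 * Z)) := by
          ring
    _ = ((1 - N * ND) ^ (2 * l + 1 + 1) * (1 - P ^ 2 * Z) ^ (2 * l + 1)) *
            ((P ^ 2) ^ (l + 1) * (1 - P ^ 2 * Z)) := by rw [hPP]
    _ = 0 := by rw [hprojp, mul_zero]
  have hMF : IsNilpotent ((N + P) * ((1 - N * ND) * (1 - P ^ 2 * Z))) := by
    have hsum : (N + P) * ((1 - N * ND) * (1 - P ^ 2 * Z)) =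
        N * ((1 - N * ND) * (1 - P ^ 2 * Z)) + P * ((1 - N * ND) * (1 - P ^ 2 * Z)) := by
      ring
    rw [hsum]
    exact (Commute.all _ _).isNilpotent_add hnilnF hnilpF
  obtain ⟨m0, hm0⟩ := hMF
  have hm0' : ((N + P) * ((1 - N * ND) * (1 - P ^ 2 * Z))) ^ (m0 + 1) = 0 := by
    rw [pow_succ, hm0, zero_mul]
  -- the nine product identities
  have h11 : ((N + P) * (N * ND)) * (ND * w * (N * ND)) = N * ND := by
    calc ((N + P) * (N * ND)) * (ND * w * (N * ND))
        = (N * (N * ND ^ 2)) * (w * (N * ND)) + ((N * ND ^ 2) * P) * (w * (N * ND)) := by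
          ring
    _ = (N * ND) * (w * (N * ND)) + (ND * P) * (w * (N * ND)) := by rw [F1]
    _ = N * ND := by linear_combination w * hE2 + (N * ND) * hw
  have h22 : ((N + P) * ((1 - N * ND) * (P ^ 2 * Z))) *
      (P * Z * w' * ((1 - N * ND) * (P ^ 2 * Z))) = (1 - N * ND) * (P ^ 2 * Z) := by
    have e1 : ((1 - N * ND) * (P ^ 2 * Z)) * ((1 - N * ND) * (P ^ 2 * Z)) =
        (1 - N * ND) * (P ^ 2 * Z) := by
      linear_combination ((1 - N * ND) ^ 2) * hEp2 + (P ^ 2 * Z) * hE2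
    have e3 : (P ^ 2 * Z) * ((1 - N * ND) * (P ^ 2 * Z)) = (1 - N * ND) * (P ^ 2 * Z) := by
      linear_combination (1 - N * ND) * hEp2
    have e4 : (P * Z * N * (1 - N * ND)) * ((1 - N * ND) * (P ^ 2 * Z)) =
        (N * (P * Z)) * ((1 - N * ND) * (P ^ 2 * Z)) := by
      linear_combination (N * P * Z * (P ^ 2 * Z)) * hE2
    calc ((N + P) * ((1 - N * ND) * (P ^ 2 * Z))) *
        (P * Z * w' * ((1 - N * ND) * (P ^ 2 * Z)))
        = ((N + P) * (P * Z) * w') *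
            (((1 - N * ND) * (P ^ 2 * Z)) * ((1 - N * ND) * (P ^ 2 * Z))) := by ring
    _ = ((N + P) * (P * Z) * w') * ((1 - N * ND) * (P ^ 2 * Z)) := by rw [e1]
    _ = w' * ((N * (P * Z)) * ((1 - N * ND) * (P ^ 2 * Z))) +
          w' * ((P ^ 2 * Z) * ((1 - N * ND) * (P ^ 2 * Z))) := by ring
    _ = w' * ((P * Z * N * (1 - N * ND)) * ((1 - N * ND) * (P ^ 2 * Z))) +
          w' * ((1 - N * ND) * (P ^ 2 * Z)) := by rw [← e4, e3]
    _ = (w' * (1 + P * Z * N * (1 - N * ND))) * ((1 - N * ND) * (P ^ 2 * Z)) := by ring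
    _ = (1 - N * ND) * (P ^ 2 * Z) := by rw [hw', one_mul]
  have h33 : ((1 - N * ND) * (1 - P ^ 2 * Z)) * ((1 - N * ND) * (1 - P ^ 2 * Z)) =
      (1 - N * ND) * (1 - P ^ 2 * Z) := by
    linear_combination ((1 - N * ND) ^ 2) * hEp2 + (1 - P ^ 2 * Z) * hE2
  have h12 : ((N + P) * (N * ND)) * (P * Z * w' * ((1 - N * ND) * (P ^ 2 * Z))) = 0 := by
    linear_combination (-((N + P) * (P * Z) * w' * (P ^ 2 * Z))) * hE2
  have h13 : ((N + P) * (N * ND)) * ((1 - N * ND) * (1 - P ^ 2 * Z)) = 0 := by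
    linear_combination (-((N + P) * (1 - P ^ 2 * Z))) * hE2
  have h21 : ((N + P) * ((1 - N * ND) * (P ^ 2 * Z))) * (ND * w * (N * ND)) = 0 := by
    linear_combination (-((N + P) * (P ^ 2 * Z) * ND * w)) * hE2
  have h23 : ((N + P) * ((1 - N * ND) * (P ^ 2 * Z))) *
      ((1 - N * ND) * (1 - P ^ 2 * Z)) = 0 := by
    linear_combination (-((N + P) * (1 - N * ND) ^ 2)) * hEp2
  have h31 : ((1 - N * ND) * (1 - P ^ 2 * Z)) * (ND * w * (N * ND)) = 0 := by
    linear_combination (-(ND * w * (1 - P ^ 2 * Z))) * hE2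
  have h32 : ((1 - N * ND) * (1 - P ^ 2 * Z)) *
      (P * Z * w' * ((1 - N * ND) * (P ^ 2 * Z))) = 0 := by
    linear_combination (-(P * Z * w' * (1 - N * ND) ^ 2)) * hEp2
  refine ⟨ND * w * (N * ND) + P * Z * w' * ((1 - N * ND) * (P ^ 2 * Z)) +
    (1 - N * ND) * (1 - P ^ 2 * Z), m0, ?_⟩
  rintro e rfl
  refine ⟨by linear_combination h33, by ring, ?_, ?_, ?_⟩
  · have h1e : (1 : A) - (1 - (1 - N * ND) * (1 - P * P * Z)) =
        (1 - N * ND) * (1 - P ^ 2 * Z) := by ring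
    rw [h1e]
    exact hm0'
  · linear_combination h11 + h12 + h13 + h21 + h22 + h23 + h31 + h32 + h33
  · rw [mul_comm]
    linear_combination h11 + h12 + h13 + h21 + h22 + h23 + h31 + h32 + h33

end Core

section Main
variable {R : Type*} [Ring R] [StarRing R]

lemma main_sum {n p nd z : R}
    (hn : IsDrazin n nd) (hz : IsDrazin (p * p) z)
    (hc : n * p = p * n)
    (s1 : star (n * nd) = n * nd) (s2 : star (p * (p * z)) = p * (p * z))
    (hnil : IsNilpotent (nd * p)) : IsStarDMP (n + p) := by
  obtain ⟨k, hk1, hk2, hk3⟩ := hn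
  obtain ⟨l, hl1, hl2, hl3⟩ := hz
  obtain ⟨t, ht⟩ := hnil
  -- commutation facts in R
  have c_nd_p : p * nd = nd * p := drazin_comm ⟨k, hk1, hk2, hk3⟩ hc.symm
  have c_pp_n : n * (p * p) = (p * p) * n := by
    calc n * (p * p) = (n * p) * p := by noncomm_ring
    _ = (p * n) * p := by rw [hc]
    _ = p * (n * p) := by noncomm_ring
    _ = p * (p * n) := by rw [hc]
    _ = (p * p) * n := by noncomm_ring
  have c_pp_nd : nd * (p * p) = (p * p) * nd := by
    calc nd * (p * p) = (nd * p) * p := by noncomm_ring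
    _ = (p * nd) * p := by rw [← c_nd_p]
    _ = p * (nd * p) := by noncomm_ring
    _ = p * (p * nd) := by rw [← c_nd_p]
    _ = (p * p) * nd := by noncomm_ring
  have c_z_n : n * z = z * n := drazin_comm ⟨l, hl1, hl2, hl3⟩ c_pp_n
  have c_z_p : p * z = z * p := drazin_comm ⟨l, hl1, hl2, hl3⟩ (by noncomm_ring)
  have c_z_nd : nd * z = z * nd := drazin_comm ⟨l, hl1, hl2, hl3⟩ c_pp_nd
  -- the commutative subring
  have hcomm : ∀ x ∈ ({n, p, nd, z} : Set R), ∀ y ∈ ({n, p, nd, z} : Set R),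
      x * y = y * x := by
    intro x hx y hy
    simp only [Set.mem_insert_iff, Set.mem_singleton_iff] at hx hy
    obtain rfl | rfl | rfl | rfl := hx <;> obtain rfl | rfl | rfl | rfl := hy <;>
      first
        | rfl
        | exact hc | exact hc.symm
        | exact hk3 | exact hk3.symm
        | exact c_nd_p | exact c_nd_p.symm
        | exact c_z_n | exact c_z_n.symm
        | exact c_z_p | exact c_z_p.symm
        | exact c_z_nd | exact c_z_nd.symm
  letI : CommRing ↥(Subring.closure ({n, p, nd, z} : Set R)) :=
    Subring.closureCommRingOfComm hcomm
  let N : ↥(Subring.closure ({n, p, nd, z} : Set R)) := ⟨n, Subring.subset_closure (by simp)⟩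
  let P : ↥(Subring.closure ({n, p, nd, z} : Set R)) := ⟨p, Subring.subset_closure (by simp)⟩
  let ND : ↥(Subring.closure ({n, p, nd, z} : Set R)) := ⟨nd, Subring.subset_closure (by simp)⟩
  let Z : ↥(Subring.closure ({n, p, nd, z} : Set R)) := ⟨z, Subring.subset_closure (by simp)⟩
  have hvN : ((N :) : R) = n := rfl
  have hvP : ((P :) : R) = p := rfl
  have hvND : ((ND :) : R) = nd := rfl
  have hvZ : ((Z :) : R) = z := rfl
  have cval_mul : ∀ X Y : ↥(Subring.closure ({n, p, nd, z} : Set R)),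
      ((X * Y :) : R) = (X : R) * (Y : R) := fun _ _ => rfl
  have cval_add : ∀ X Y : ↥(Subring.closure ({n, p, nd, z} : Set R)),
      ((X + Y :) : R) = (X : R) + (Y : R) := fun _ _ => rfl
  have cval_sub : ∀ X Y : ↥(Subring.closure ({n, p, nd, z} : Set R)),
      ((X - Y :) : R) = (X : R) - (Y : R) := fun _ _ => rfl
  have cval_one : (((1 : ↥(Subring.closure ({n, p, nd, z} : Set R))) :) : R) = 1 := rfl
  have cval_zero : (((0 : ↥(Subring.closure ({n, p, nd, z} : Set R))) :) : R) = 0 := rfl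
  have cval_pow : ∀ (X : ↥(Subring.closure ({n, p, nd, z} : Set R))) (j : ℕ),
      ((X ^ j :) : R) = (X : R) ^ j := fun _ _ => rfl
  -- lift the hypotheses into S
  have F1 : N * ND ^ 2 = ND := by
    apply Subtype.ext
    rw [cval_mul, cval_pow, hvN, hvND]
    exact hk2
  have F2 : ND * N ^ (k + 1) = N ^ k := by
    apply Subtype.ext
    rw [cval_mul, cval_pow, cval_pow, hvN, hvND]
    exact hk1
  have G1 : (P * P) * Z ^ 2 = Z := by
    apply Subtype.ext
    rw [cval_mul, cval_mul, cval_pow, hvP, hvZ]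
    exact hl2
  have G2 : Z * (P * P) ^ (l + 1) = (P * P) ^ l := by
    apply Subtype.ext
    rw [cval_mul, cval_pow, cval_pow, cval_mul, hvP, hvZ]
    exact hl1
  have Hnu : (ND * P) ^ t = 0 := by
    apply Subtype.ext
    rw [cval_pow, cval_mul, cval_zero, hvP, hvND]
    exact ht
  obtain ⟨V, m0, hcore⟩ := core_computation N P ND Z k l t F1 F2 G1 G2 Hnu
  let eS : ↥(Subring.closure ({n, p, nd, z} : Set R)) := 1 - (1 - N * ND) * (1 - P * P * Z)
  have heSdef : eS = 1 - (1 - N * ND) * (1 - P * P * Z) := rfl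
  obtain ⟨hee, hcomm_e, hnil_e, hUV, hVU⟩ := hcore eS heSdef
  -- push everything down to R
  have he : ((eS :) : R) * ((eS :) : R) = ((eS :) : R) := by
    have := congrArg (fun x : ↥(Subring.closure ({n, p, nd, z} : Set R)) => (x : R)) hee
    simpa only [cval_mul] using this
  have hcoe_e : ((eS :) : R) = 1 - (1 - n * nd) * (1 - p * (p * z)) := by
    have := congrArg (fun x : ↥(Subring.closure ({n, p, nd, z} : Set R)) => (x : R)) heSdef
    simp only [cval_sub, cval_mul, cval_one, hvN, hvP, hvND, hvZ] at this
    rw [this, mul_assoc]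
  have cab : (p * (p * z)) * (n * nd) = (n * nd) * (p * (p * z)) := by
    have := congrArg (fun x : ↥(Subring.closure ({n, p, nd, z} : Set R)) => (x : R))
      (mul_comm (P * (P * Z)) (N * ND))
    simpa only [cval_mul, hvN, hvP, hvND, hvZ] using this
  have hse : star ((eS :) : R) = ((eS :) : R) := by
    rw [hcoe_e]
    simp only [star_sub, star_one, star_mul, s1, s2]
    have hcms : (1 - p * (p * z)) * (1 - n * nd) = (1 - n * nd) * (1 - p * (p * z)) := by
      calc (1 - p * (p * z)) * (1 - n * nd)
          = 1 - (n * nd) - (p * (p * z)) + (p * (p * z)) * (n * nd) := by noncomm_ring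
      _ = 1 - (n * nd) - (p * (p * z)) + (n * nd) * (p * (p * z)) := by rw [cab]
      _ = (1 - n * nd) * (1 - p * (p * z)) := by noncomm_ring
    rw [hcms]
  have hceR : (n + p) * ((eS :) : R) = ((eS :) : R) * (n + p) := by
    have := congrArg (fun x : ↥(Subring.closure ({n, p, nd, z} : Set R)) => (x : R)) hcomm_e
    simpa only [cval_mul, cval_add, hvN, hvP] using this
  have hnilR : ((n + p) * (1 - ((eS :) : R))) ^ (m0 + 1) = 0 := by
    have := congrArg (fun x : ↥(Subring.closure ({n, p, nd, z} : Set R)) => (x : R)) hnil_e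
    simpa only [cval_pow, cval_mul, cval_sub, cval_add, cval_one, cval_zero, hvN, hvP]
      using this
  have hUVR : ((n + p) * ((eS :) : R) + (1 - ((eS :) : R))) * ((V :) : R) = 1 := by
    have := congrArg (fun x : ↥(Subring.closure ({n, p, nd, z} : Set R)) => (x : R)) hUV
    simpa only [cval_mul, cval_add, cval_sub, cval_one, hvN, hvP] using this
  have hVUR : ((V :) : R) * ((n + p) * ((eS :) : R) + (1 - ((eS :) : R))) = 1 := by
    have := congrArg (fun x : ↥(Subring.closure ({n, p, nd, z} : Set R)) => (x : R)) hVU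
    simpa only [cval_mul, cval_add, cval_sub, cval_one, hvN, hvP] using this
  exact isStarDMP_of_proj m0 he hse hceR hnilR hUVR hVUR

end Main

section MatrixLayer
variable {R : Type*} [Ring R]

lemma nilp_swap {x y : R} (h : IsNilpotent (x * y)) : IsNilpotent (y * x) := by
  obtain ⟨u, hu⟩ := h
  refine ⟨u + 1, ?_⟩
  have key : ∀ v : ℕ, (y * x) ^ (v + 1) = y * (x * y) ^ v * x := by
    intro v
    induction v with
    | zero => simp [mul_assoc]
    | succ v ih =>
      calc (y * x) ^ (v + 2) = (y * x) ^ (v + 1) * (y * x) := by rw [pow_succ]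
      _ = (y * (x * y) ^ v * x) * (y * x) := by rw [ih]
      _ = y * ((x * y) ^ v * (x * y)) * x := by noncomm_ring
      _ = y * (x * y) ^ (v + 1) * x := by rw [← pow_succ]
  rw [key u, hu, mul_zero, zero_mul]

lemma nilp_of_sq {x : R} (h : IsNilpotent (x * x)) : IsNilpotent x := by
  obtain ⟨u, hu⟩ := h
  refine ⟨2 * u, ?_⟩
  rw [pow_mul, sq, hu]

end MatrixLayer

section Blocks
variable {u : Type*} [Fintype u] [DecidableEq u] {α : Type*} [CommRing α]

lemma fromBlocks_diag_pow (X : Matrix u u α) (Y : Matrix u u α) (j : ℕ) :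
    (Matrix.fromBlocks X 0 0 Y) ^ j = Matrix.fromBlocks (X ^ j) 0 0 (Y ^ j) := by
  induction j with
  | zero => simp [Matrix.fromBlocks_one]
  | succ j ih =>
    rw [pow_succ, ih, Matrix.fromBlocks_multiply]
    simp [pow_succ]

lemma isDrazin_fromBlocks {X X' Y Y' : Matrix u u α}
    (hX : IsDrazin X X') (hY : IsDrazin Y Y') :
    IsDrazin (Matrix.fromBlocks X 0 0 Y) (Matrix.fromBlocks X' 0 0 Y') := by
  obtain ⟨k1, hX1, hX2, hX3⟩ := hX
  obtain ⟨k2, hY1, hY2, hY3⟩ := hY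
  have hX1' : X' * X ^ (max k1 k2 + 1) = X ^ (max k1 k2) := by
    have := drazin_mono hX1 (max k1 k2 - k1)
    rwa [show k1 + (max k1 k2 - k1) = max k1 k2 by omega] at this
  have hY1' : Y' * Y ^ (max k1 k2 + 1) = Y ^ (max k1 k2) := by
    have := drazin_mono hY1 (max k1 k2 - k2)
    rwa [show k2 + (max k1 k2 - k2) = max k1 k2 by omega] at this
  refine ⟨max k1 k2, ?_, ?_, ?_⟩
  · rw [fromBlocks_diag_pow, fromBlocks_diag_pow, Matrix.fromBlocks_multiply]
    simp [hX1', hY1']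
  · rw [sq, Matrix.fromBlocks_multiply, Matrix.fromBlocks_multiply]
    simp only [Matrix.mul_zero, Matrix.zero_mul, add_zero, zero_add, mul_zero, zero_mul]
    rw [show X * (X' * X') = X * X' ^ 2 by rw [sq], show Y * (Y' * Y') = Y * Y' ^ 2 by rw [sq],
      hX2, hY2]
  · rw [Matrix.fromBlocks_multiply, Matrix.fromBlocks_multiply]
    simp [hX3, hY3]

lemma isNilpotent_fromBlocks_diag {X Y : Matrix u u α}
    (hX : IsNilpotent X) (hY : IsNilpotent Y) :
    IsNilpotent (Matrix.fromBlocks X 0 0 Y) := by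
  obtain ⟨a, ha⟩ := hX
  obtain ⟨b, hb⟩ := hY
  refine ⟨max a b, ?_⟩
  rw [fromBlocks_diag_pow]
  have hXa : X ^ max a b = 0 := by
    rw [show max a b = a + (max a b - a) by omega, pow_add, ha, zero_mul]
  have hYb : Y ^ max a b = 0 := by
    rw [show max a b = b + (max a b - b) by omega, pow_add, hb, zero_mul]
  rw [hXa, hYb, Matrix.fromBlocks_zero]

end Blocks


variable {A : Type*} [NormedRing A] [StarRing A] [NormedAlgebra ℂ A] [CompleteSpace A]

theorem stmt14 {n : ℕ} (A B C D AD DD : Matrix (Fin n) (Fin n) ℂ)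
    (hA : IsStarDMP A) (hD : IsStarDMP D)
    (hBC : IsStarDMP (B * C)) (hCB : IsStarDMP (C * B))
    (hAD : IsDrazin A AD) (hDD : IsDrazin D DD)
    (h1 : A * B = B * D) (h2 : D * C = C * A)
    (h3 : star B * A = D * star B)
    (h5 : IsNilpotent (AD * B * (DD * C))) :
    IsStarDMP (Matrix.fromBlocks A B C D) := by
  classical
  -- Drazin inverses for B*C and C*B
  obtain ⟨m1, hm1, x1, mp1, gi1⟩ := hBC
  obtain ⟨m2, hm2, x2, mp2, gi2⟩ := hCB
  match m1, hm1, m2, hm2 with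
  | (j1 + 1), _, (j2 + 1), _ =>
  have hWBC : IsDrazin (B * C) ((B * C) ^ j1 * x1) := (groupInv_pow_drazin j1 gi1).1
  have hWCB : IsDrazin (C * B) ((C * B) ^ j2 * x2) := (groupInv_pow_drazin j2 gi2).1
  set WBC := (B * C) ^ j1 * x1 with hWBCdef
  set WCB := (C * B) ^ j2 * x2 with hWCBdef
  have hsBC : star ((B * C) * WBC) = (B * C) * WBC :=
    starDMP_proj ⟨j1 + 1, by omega, x1, mp1, gi1⟩ hWBC
  have hsCB : star ((C * B) * WCB) = (C * B) * WCB :=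
    starDMP_proj ⟨j2 + 1, by omega, x2, mp2, gi2⟩ hWCB
  have hsA : star (A * AD) = A * AD := starDMP_proj hA hAD
  have hsD : star (D * DD) = D * DD := starDMP_proj hD hDD
  -- block matrices
  set NN := Matrix.fromBlocks A 0 0 D with hNN
  set PP := Matrix.fromBlocks 0 B C 0 with hPP
  set ND' := Matrix.fromBlocks AD 0 0 DD with hND'
  set ZZ := Matrix.fromBlocks WBC 0 0 WCB with hZZ
  have hsum : Matrix.fromBlocks A B C D = NN + PP := by
    rw [hNN, hPP, Matrix.fromBlocks_add]
    simp
  have hn : IsDrazin NN ND' := isDrazin_fromBlocks hAD hDD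
  have hppsq : PP * PP = Matrix.fromBlocks (B * C) 0 0 (C * B) := by
    rw [hPP, Matrix.fromBlocks_multiply]
    simp
  have hz : IsDrazin (PP * PP) ZZ := by
    rw [hppsq, hZZ]
    exact isDrazin_fromBlocks hWBC hWCB
  have hcom : NN * PP = PP * NN := by
    rw [hNN, hPP, Matrix.fromBlocks_multiply, Matrix.fromBlocks_multiply]
    simp [h1, h2]
  have hs1 : star (NN * ND') = NN * ND' := by
    have hmul : NN * ND' = Matrix.fromBlocks (A * AD) 0 0 (D * DD) := by
      rw [hNN, hND', Matrix.fromBlocks_multiply]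
      simp
    rw [hmul, Matrix.star_eq_conjTranspose, Matrix.fromBlocks_conjTranspose]
    rw [Matrix.star_eq_conjTranspose] at hsA hsD
    simp [hsA, hsD]
  have hs2 : star (PP * (PP * ZZ)) = PP * (PP * ZZ) := by
    have hmul : PP * (PP * ZZ) = Matrix.fromBlocks ((B * C) * WBC) 0 0 ((C * B) * WCB) := by
      rw [hPP, hZZ, Matrix.fromBlocks_multiply, Matrix.fromBlocks_multiply]
      simp [mul_assoc]
    rw [hmul, Matrix.star_eq_conjTranspose, Matrix.fromBlocks_conjTranspose]
    rw [Matrix.star_eq_conjTranspose] at hsBC hsCB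
    simp [hsBC, hsCB]
  have hnil : IsNilpotent (ND' * PP) := by
    apply nilp_of_sq
    have hmul : (ND' * PP) * (ND' * PP) =
        Matrix.fromBlocks ((AD * B) * (DD * C)) 0 0 ((DD * C) * (AD * B)) := by
      rw [hND', hPP, Matrix.fromBlocks_multiply, Matrix.fromBlocks_multiply]
      simp
    rw [hmul]
    exact isNilpotent_fromBlocks_diag h5 (nilp_swap h5)
  rw [hsum]
  exact main_sum hn hz hcom hs1 hs2 hnil
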